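/- Global safety of shielded perfect-perception MDPs (occupancy form): Let S be a finite state set partitioned into S_Δ, S_U, S_∇, let Ξ ∈ [0,1]^S vanish on S_U, let λ' ∈ [0,1], and let (T_i)_{i=0}^{n'-1} be column-stochastic matrices each satisfying ⟨Ξ, T_i e_s⟩ ≥ λ' for all s ∈ S_Δ. Define d_0 = e_ι for some ι ∈ S_Δ and d_{i+1} = T_i d_i. If ⟨C_{S_∇}, d_i⟩ = 0 for all i ≤ n', then ⟨C_{S\S_U}, d_{n'}⟩ ≥ (λ')^{n'}, equivalently ⟨C_{S_U}, d_{n'}⟩ ≤ 1 − (λ')^{n'}. -/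
import Mathlib


open Matrix BigOperators

/-- The 0/1 indicator vector of a subset `X`. -/
def ind {S : Type*} [DecidableEq S] (X : Finset S) : S → ℝ := fun i => if i ∈ X then 1 else 0

lemma ind_sum {S : Type*} [Fintype S] [DecidableEq S] (X : Finset S) (f : S → ℝ) :
    ∑ j, ind X j * f j = ∑ j ∈ X, f j := by
  simp [ind, ite_mul, Finset.sum_ite_mem]

/-- global safety of shielded perfect-perception MDPs (occupancy form). -/
theorem stmt7 {S : Type*} [Fintype S] [DecidableEq S]
    (SΔ SU Sstuck : Finset S)
    (hdisj1 : Disjoint SΔ SU) (hdisj2 : Disjoint SΔ Sstuck) (hdisj3 : Disjoint SU Sstuck)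
    (hcover : SΔ ∪ SU ∪ Sstuck = Finset.univ)
    (Ξ : S → ℝ) (hΞ0 : ∀ i, 0 ≤ Ξ i) (hΞ1 : ∀ i, Ξ i ≤ 1)
    (hΞU : ∀ i ∈ SU, Ξ i = 0)
    (l : ℝ) (hl0 : 0 ≤ l) (hl1 : l ≤ 1)
    (n' : ℕ) (T : ℕ → Matrix S S ℝ)
    (hTnn : ∀ i, ∀ j k, 0 ≤ T i j k) (hTcol : ∀ i, ∀ k, ∑ j, T i j k = 1)
    (hshield : ∀ i, ∀ s ∈ SΔ, l ≤ ∑ j, Ξ j * (T i).mulVec (Pi.single s 1) j)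
    (ι : S) (hι : ι ∈ SΔ)
    (d : ℕ → S → ℝ) (hd0 : d 0 = Pi.single ι 1)
    (hdstep : ∀ i, d (i + 1) = (T i).mulVec (d i))
    (hnostuck : ∀ i ≤ n', ∑ j, ind Sstuck j * d i j = 0) :
    l ^ n' ≤ ∑ j, ind SUᶜ j * d n' j ∧ ∑ j, ind SU j * d n' j ≤ 1 - l ^ n' := by
  -- nonnegativity of occupancy vectors
  have dnn : ∀ i j, 0 ≤ d i j := by
    intro i
    induction i with
    | zero =>
      intro j; rw [hd0]
      rcases eq_or_ne j ι with h | h <;> simp [Pi.single_apply, h]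
    | succ i ih =>
      intro j; rw [hdstep]
      exact Finset.sum_nonneg fun k _ => mul_nonneg (hTnn i j k) (ih k)
  -- total mass one
  have dsum : ∀ i, ∑ j, d i j = 1 := by
    intro i
    induction i with
    | zero => simp [hd0]
    | succ i ih =>
      rw [hdstep]
      simp only [Matrix.mulVec, dotProduct]
      rw [Finset.sum_comm]
      calc ∑ k, ∑ j, T i j k * d i k = ∑ k, (∑ j, T i j k) * d i k := by
            simp [Finset.sum_mul]
        _ = 1 := by simp [hTcol i, ih]
  -- stuck states have zero mass along the trajectory
  have hstuck : ∀ i ≤ n', ∀ j ∈ Sstuck, d i j = 0 := by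
    intro i hi j hj
    have h := hnostuck i hi
    rw [ind_sum] at h
    exact (Finset.sum_eq_zero_iff_of_nonneg (fun k _ => dnn i k)).mp h j hj
  -- rewrite the shield condition
  have hshield' : ∀ i, ∀ s ∈ SΔ, l ≤ ∑ j, Ξ j * T i j s := by
    intro i s hs
    have h := hshield i s hs
    simpa [Matrix.mulVec, dotProduct, Pi.single_apply, mul_ite] using h
  -- key invariant
  have key : ∀ i ≤ n', l ^ i ≤ ∑ j ∈ SΔ, d i j := by
    intro i
    induction i with
    | zero =>
      intro _
      have h1 : d 0 ι = 1 := by rw [hd0]; simp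
      have := Finset.single_le_sum (f := d 0) (fun j _ => dnn 0 j) hι
      rw [h1] at this; simpa using this
    | succ i ih =>
      intro hi
      have hi' : i ≤ n' := Nat.le_of_succ_le hi
      have h1 : l ^ (i + 1) ≤ l * ∑ j ∈ SΔ, d i j := by
        rw [pow_succ, mul_comm]
        exact mul_le_mul_of_nonneg_left (ih hi') hl0
      have h2 : l * ∑ j ∈ SΔ, d i j ≤ ∑ j, Ξ j * d (i + 1) j := by
        have heq : ∑ j, Ξ j * d (i + 1) j = ∑ k, (∑ j, Ξ j * T i j k) * d i k := by
          rw [hdstep]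
          simp only [Matrix.mulVec, dotProduct, Finset.mul_sum, Finset.sum_mul]
          rw [Finset.sum_comm]
          apply Finset.sum_congr rfl; intro k _
          apply Finset.sum_congr rfl; intro j _; ring
        rw [heq, Finset.mul_sum]
        calc ∑ j ∈ SΔ, l * d i j ≤ ∑ k ∈ SΔ, (∑ j, Ξ j * T i j k) * d i k := by
              apply Finset.sum_le_sum
              intro k hk
              exact mul_le_mul_of_nonneg_right (hshield' i k hk) (dnn i k)
          _ ≤ ∑ k, (∑ j, Ξ j * T i j k) * d i k := by
              apply Finset.sum_le_sum_of_subset_of_nonneg (Finset.subset_univ _)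
              intro k _ _
              exact mul_nonneg (Finset.sum_nonneg fun j _ =>
                mul_nonneg (hΞ0 j) (hTnn i j k)) (dnn i k)
      have h3 : ∑ j, Ξ j * d (i + 1) j ≤ ∑ j ∈ SΔ, d (i + 1) j := by
        have hle : ∀ j, Ξ j * d (i + 1) j ≤ ind SΔ j * d (i + 1) j + ind Sstuck j * d (i + 1) j := by
          intro j
          by_cases hU : j ∈ SU
          · rw [hΞU j hU, zero_mul]
            exact add_nonneg (mul_nonneg (by unfold ind; positivity) (dnn _ j))
              (mul_nonneg (by unfold ind; positivity) (dnn _ j))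
          · have hj : j ∈ SΔ ∪ SU ∪ Sstuck := hcover ▸ Finset.mem_univ j
            have hj' : j ∈ SΔ ∨ j ∈ Sstuck := by
              rcases Finset.mem_union.mp hj with h | h
              · rcases Finset.mem_union.mp h with h | h
                · exact Or.inl h
                · exact absurd h hU
              · exact Or.inr h
            rcases hj' with h | h
            · have hns : j ∉ Sstuck := Finset.disjoint_left.mp hdisj2 h
              simp only [ind, if_pos h, if_neg hns, one_mul, zero_mul, add_zero]
              exact mul_le_of_le_one_left (dnn _ j) (hΞ1 j)
            · have hnd : j ∉ SΔ := Finset.disjoint_right.mp hdisj2 h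
              simp only [ind, if_pos h, if_neg hnd, one_mul, zero_mul, zero_add]
              exact mul_le_of_le_one_left (dnn _ j) (hΞ1 j)
        calc ∑ j, Ξ j * d (i + 1) j
            ≤ ∑ j, (ind SΔ j * d (i + 1) j + ind Sstuck j * d (i + 1) j) :=
              Finset.sum_le_sum fun j _ => hle j
          _ = ∑ j, ind SΔ j * d (i + 1) j + ∑ j, ind Sstuck j * d (i + 1) j :=
              Finset.sum_add_distrib
          _ = ∑ j ∈ SΔ, d (i + 1) j := by rw [hnostuck (i + 1) hi, add_zero, ind_sum]
      linarith
  have hfinal := key n' le_rfl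
  have hsub : SΔ ⊆ SUᶜ := fun j hj =>
    Finset.mem_compl.mpr (Finset.disjoint_left.mp hdisj1 hj)
  have hA : l ^ n' ≤ ∑ j, ind SUᶜ j * d n' j := by
    rw [ind_sum]
    refine hfinal.trans ?_
    exact Finset.sum_le_sum_of_subset_of_nonneg hsub fun j _ _ => dnn n' j
  refine ⟨hA, ?_⟩
  have hsplit : ∑ j ∈ SU, d n' j + ∑ j ∈ SUᶜ, d n' j = 1 := by
    rw [Finset.sum_add_sum_compl]; exact dsum n'
  rw [ind_sum] at hA ⊢
  linarith
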